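/- Let F be a skew-symmetric endomorphism of a real vector space V with nondegenerate symmetric bilinear form g of Lorentzian signature. Suppose there exist a nonzero null vector k ∈ V and a nonzero real number μ such that (F ∘ F)(u) = μ g(k,u) k for all u ∈ V. Then there exists w ∈ V, linearly independent of k, with g(k,w) = 0 and g(w,w) = −μ, such that F(u) = g(w,u)k − g(k,u)w for all u ∈ V. Conversely, any F of this form with k null, w orthogonal to and linearly independent of k, satisfies (F ∘ F)(u) = −g(w,w) g(k,u) k. -/

import Mathlib

lemma sum_sq_cauchy {ι : Type*} [Fintype ι] (a c : ι → ℝ) (a0 c0 : ℝ)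
    (ha : ∑ i, a i * a i = a0 * a0) (hc : ∑ i, c i * c i = c0 * c0)
    (hac : ∑ i, a i * c i = a0 * c0) (ha0 : a0 ≠ 0) :
    ∀ i, c i = (c0 / a0) * a i := by
  have hsum : ∑ i, (a0 * c i - c0 * a i)^2 = 0 := by
    have h1 : ∀ i ∈ Finset.univ (α := ι), (a0 * c i - c0 * a i)^2
        = a0*a0*(c i * c i) - 2*a0*c0*(a i * c i) + c0*c0*(a i * a i) := by
      intro i _; ring
    rw [Finset.sum_congr rfl h1, Finset.sum_add_distrib, Finset.sum_sub_distrib,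
      ← Finset.mul_sum, ← Finset.mul_sum, ← Finset.mul_sum, ha, hc, hac]
    ring
  intro i
  have h2 := (Finset.sum_eq_zero_iff_of_nonneg (fun i _ => sq_nonneg _)).mp hsum i
    (Finset.mem_univ i)
  have h3 : a0 * c i - c0 * a i = 0 := by
    exact sub_eq_zero.mpr (sub_eq_zero.mp (sq_eq_zero_iff.mp h2))
  field_simp
  linarith [h3]

/-- Lemma B.5 (Lorentzian case): if F is skew-symmetric on a Lorentzian vector space and
F ∘ F = μ k ⊗ k♭ with k null nonzero and μ ≠ 0, then F = k ⊗ w♭ − w ⊗ k♭ with w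
orthogonal to and linearly independent of k and g(w,w) = −μ; and conversely. -/
theorem skew_sq_rank_one_lorentzian
    (p q : ℕ) (V : Type*) [AddCommGroup V] [Module ℝ V]
    (B : V →ₗ[ℝ] V →ₗ[ℝ] ℝ)
    (b : Module.Basis (Fin p ⊕ Fin q) ℝ V)
    (hb : ∀ i j, B (b i) (b j) =
      if i = j then Sum.elim (fun _ => (-1 : ℝ)) (fun _ => (1 : ℝ)) i else 0)
    (hLor : p = 1 ∨ q = 1)
    (F : V →ₗ[ℝ] V)
    (hskew : ∀ u v : V, B (F u) v = - B u (F v))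
    (k : V) (hk0 : k ≠ 0) (hknull : B k k = 0)
    (μ : ℝ) (hμ : μ ≠ 0)
    (hFF : ∀ u : V, F (F u) = (μ * B k u) • k) :
    (∃ w : V, LinearIndependent ℝ ![k, w] ∧ B k w = 0 ∧ B w w = -μ ∧
      ∀ u : V, F u = B w u • k - B k u • w) ∧
    (∀ (k' w' : V) (G : V →ₗ[ℝ] V), B k' k' = 0 → B k' w' = 0 →
      LinearIndependent ℝ ![k', w'] →
      (∀ u : V, G u = B w' u • k' - B k' u • w') →
      ∀ u : V, G (G u) = (-(B w' w') * B k' u) • k') := by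
  classical
  set ε : Fin p ⊕ Fin q → ℝ := Sum.elim (fun _ => (-1:ℝ)) (fun _ => 1) with hε
  -- coordinate expression of B
  have hBrepr : ∀ u v : V, B u v = ∑ i, ε i * (b.repr u i * b.repr v i) := by
    intro u v
    conv_lhs => rw [← b.sum_repr u, ← b.sum_repr v]
    simp only [map_sum, map_smul, LinearMap.sum_apply, LinearMap.smul_apply,
      smul_eq_mul, hb]
    simp only [mul_ite, mul_zero, Finset.sum_ite_eq', Finset.mem_univ, if_true]
    exact Finset.sum_congr rfl fun i _ => by ring
  -- symmetry
  have hsym : ∀ u v : V, B u v = B v u := by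
    intro u v
    rw [hBrepr, hBrepr]
    exact Finset.sum_congr rfl (fun i _ => by ring)
  -- key Lorentzian fact: null vectors orthogonal to a nonzero null vector are proportional
  have key : ∀ x y : V, B x x = 0 → B y y = 0 → B x y = 0 → x ≠ 0 →
      ∃ c : ℝ, y = c • x := by
    intro x y hxx hyy hxy hx
    rcases hLor with hp | hq
    · subst hp
      set x0 := b.repr x (Sum.inl 0) with hx0def
      set y0 := b.repr y (Sum.inl 0) with hy0def
      set xa : Fin q → ℝ := fun j => b.repr x (Sum.inr j) with hxadef
      set ya : Fin q → ℝ := fun j => b.repr y (Sum.inr j) with hyadef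
      have hsplit : ∀ u v : V, B u v =
          -(b.repr u (Sum.inl 0) * b.repr v (Sum.inl 0)) +
          ∑ j, b.repr u (Sum.inr j) * b.repr v (Sum.inr j) := by
        intro u v
        rw [hBrepr, Fintype.sum_sum_type]
        simp [hε]
      have h1 : ∑ j, xa j * xa j = x0 * x0 := by
        have := hsplit x x; rw [hxx] at this; linarith
      have h2 : ∑ j, ya j * ya j = y0 * y0 := by
        have := hsplit y y; rw [hyy] at this; linarith
      have h3 : ∑ j, xa j * ya j = x0 * y0 := by
        have := hsplit x y; rw [hxy] at this; linarith
      have hx0 : x0 ≠ 0 := by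
        intro h0
        apply hx
        have hza : ∀ j, xa j = 0 := by
          intro j
          have hz : ∑ j, xa j * xa j = 0 := by rw [h1, h0, mul_zero]
          have := (Finset.sum_eq_zero_iff_of_nonneg
            (fun j _ => mul_self_nonneg (xa j))).mp hz j (Finset.mem_univ j)
          exact mul_self_eq_zero.mp this
        have hrep : b.repr x = 0 := by
          ext i
          rcases i with i | j
          · have : i = 0 := Subsingleton.elim i 0
            subst this
            simpa using h0
          · simpa using hza j
        have := congrArg (b.repr.symm) hrep
        simpa using this
      have hya := sum_sq_cauchy xa ya x0 y0 h1 h2 h3 hx0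
      refine ⟨y0 / x0, ?_⟩
      apply b.repr.injective
      rw [map_smul]
      ext i
      rcases i with i | j
      · have : i = 0 := Subsingleton.elim i 0
        subst this
        simp only [Finsupp.smul_apply, smul_eq_mul]
        rw [← hx0def, ← hy0def]
        field_simp
      · simp only [Finsupp.smul_apply, smul_eq_mul]
        rw [show b.repr y (Sum.inr j) = ya j from rfl,
          show b.repr x (Sum.inr j) = xa j from rfl, hya j]
    · subst hq
      set x0 := b.repr x (Sum.inr 0) with hx0def
      set y0 := b.repr y (Sum.inr 0) with hy0def
      set xa : Fin p → ℝ := fun j => b.repr x (Sum.inl j) with hxadef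
      set ya : Fin p → ℝ := fun j => b.repr y (Sum.inl j) with hyadef
      have hsplit : ∀ u v : V, B u v =
          (b.repr u (Sum.inr 0) * b.repr v (Sum.inr 0)) -
          ∑ j, b.repr u (Sum.inl j) * b.repr v (Sum.inl j) := by
        intro u v
        rw [hBrepr, Fintype.sum_sum_type]
        simp [hε]
        ring
      have h1 : ∑ j, xa j * xa j = x0 * x0 := by
        have := hsplit x x; rw [hxx] at this; linarith
      have h2 : ∑ j, ya j * ya j = y0 * y0 := by
        have := hsplit y y; rw [hyy] at this; linarith
      have h3 : ∑ j, xa j * ya j = x0 * y0 := by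
        have := hsplit x y; rw [hxy] at this; linarith
      have hx0 : x0 ≠ 0 := by
        intro h0
        apply hx
        have hza : ∀ j, xa j = 0 := by
          intro j
          have hz : ∑ j, xa j * xa j = 0 := by rw [h1, h0, mul_zero]
          have := (Finset.sum_eq_zero_iff_of_nonneg
            (fun j _ => mul_self_nonneg (xa j))).mp hz j (Finset.mem_univ j)
          exact mul_self_eq_zero.mp this
        have hrep : b.repr x = 0 := by
          ext i
          rcases i with j | i
          · simpa using hza j
          · have : i = 0 := Subsingleton.elim i 0
            subst this
            simpa using h0
        have := congrArg (b.repr.symm) hrep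
        simpa using this
      have hya := sum_sq_cauchy xa ya x0 y0 h1 h2 h3 hx0
      refine ⟨y0 / x0, ?_⟩
      apply b.repr.injective
      rw [map_smul]
      ext i
      rcases i with j | i
      · simp only [Finsupp.smul_apply, smul_eq_mul]
        rw [show b.repr y (Sum.inl j) = ya j from rfl,
          show b.repr x (Sum.inl j) = xa j from rfl, hya j]
      · have : i = 0 := Subsingleton.elim i 0
        subst this
        simp only [Finsupp.smul_apply, smul_eq_mul]
        rw [← hx0def, ← hy0def]
        field_simp
  -- nondegeneracy: find u₀ with B k u₀ = 1
  obtain ⟨u₀, hu₀⟩ : ∃ u₀ : V, B k u₀ = 1 := by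
    obtain ⟨j, hj⟩ : ∃ j, b.repr k j ≠ 0 := by
      by_contra h
      push_neg at h
      apply hk0
      have hrep : b.repr k = 0 := by ext i; simpa using h i
      have := congrArg (b.repr.symm) hrep
      simpa using this
    have hεj : ε j ≠ 0 := by rcases j with j | j <;> simp [hε]
    have hBkbj : B k (b j) = ε j * b.repr k j := by
      rw [hBrepr]
      rw [Finset.sum_congr rfl (fun i _ => by
        rw [Module.Basis.repr_self, Finsupp.single_apply, mul_ite, mul_ite, mul_one,
          mul_zero, mul_zero] :
        ∀ i ∈ Finset.univ, ε i * (b.repr k i * (b.repr (b j)) i)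
          = if j = i then ε i * b.repr k i else 0)]
      rw [Finset.sum_ite_eq Finset.univ j (fun i => ε i * b.repr k i)]
      simp
    have hne : B k (b j) ≠ 0 := by rw [hBkbj]; exact mul_ne_zero hεj hj
    exact ⟨(B k (b j))⁻¹ • b j, by rw [map_smul, smul_eq_mul, inv_mul_cancel₀ hne]⟩
  -- F k = 0
  have hFk : F k = 0 := by
    have h1 : ∀ u : V, (μ * B k u) • F k = (-(μ * B (F k) u)) • k := by
      intro u
      have e1 : F (F (F u)) = (μ * B k u) • F k := by rw [hFF u, map_smul]
      have e2 : F (F (F u)) = (μ * B k (F u)) • k := hFF (F u)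
      have e3 : B k (F u) = - B (F k) u := by
        have := hskew k u; linarith
      rw [e3] at e2
      rw [← e1, e2]
      ring_nf
    have h2 := h1 u₀
    rw [hu₀, mul_one] at h2
    set c : ℝ := μ⁻¹ * -(μ * B (F k) u₀) with hcdef
    have hc : F k = c • k := by
      have : μ⁻¹ • (μ • F k) = μ⁻¹ • ((-(μ * B (F k) u₀)) • k) := by rw [h2]
      rwa [smul_smul, smul_smul, inv_mul_cancel₀ hμ, one_smul, ← hcdef] at this
    have hFFk : F (F k) = 0 := by
      rw [hFF k, hknull, mul_zero, zero_smul]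
    have h4 : (c * c) • k = (0 : V) := by
      calc (c * c) • k = c • (c • k) := by rw [mul_smul]
        _ = c • F k := by rw [← hc]
        _ = F (c • k) := (map_smul F c k).symm
        _ = F (F k) := by rw [← hc]
        _ = 0 := hFFk
    have hcc : c = 0 := by
      rcases smul_eq_zero.mp h4 with h | h
      · exact mul_self_eq_zero.mp h
      · exact absurd h hk0
    rw [hc, hcc, zero_smul]
  have hBkF : ∀ u : V, B k (F u) = 0 := by
    intro u
    have := hskew k u
    rw [hFk] at this
    simp only [map_zero, LinearMap.zero_apply] at this
    linarith
  have hFgF : ∀ u v : V, B (F u) (F v) = -(μ * B k u * B k v) := by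
    intro u v
    rw [hskew u (F v), hFF v, map_smul, smul_eq_mul, hsym u k]
    ring
  set w : V := -F u₀ with hw
  have hkw : B k w = 0 := by
    rw [hw, map_neg]
    rw [hBkF u₀]
    ring
  have hww : B w w = -μ := by
    simp only [hw, map_neg, LinearMap.neg_apply, neg_neg]
    rw [hFgF, hu₀]
    ring
  have hwu₀ : B w u₀ = 0 := by
    have h1 := hskew u₀ u₀
    have h2 := hsym (F u₀) u₀
    simp only [hw, map_neg, LinearMap.neg_apply]
    linarith
  have hker : ∀ v : V, B k v = 0 → F v = B w v • k := by
    intro v hv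
    have h1 : B (F v) (F v) = 0 := by rw [hFgF, hv]; ring
    have h2 : B k (F v) = 0 := hBkF v
    obtain ⟨c, hc⟩ := key k (F v) hknull h1 h2 hk0
    have h3 : B u₀ (F v) = c * B u₀ k := by rw [hc, map_smul, smul_eq_mul]
    have h4 : B u₀ k = 1 := by rw [hsym]; exact hu₀
    have h5 : B u₀ (F v) = - B (F u₀) v := by have := hskew u₀ v; linarith
    have h6 : B w v = - B (F u₀) v := by
      simp only [hw, map_neg, LinearMap.neg_apply]
    have : c = B w v := by rw [h6, ← h5, h3, h4, mul_one]
    rw [hc, this]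
  have hmain : ∀ u : V, F u = B w u • k - B k u • w := by
    intro u
    have hv : B k (u - B k u • u₀) = 0 := by
      rw [map_sub, map_smul, hu₀, smul_eq_mul, mul_one, sub_self]
    have h := hker _ hv
    rw [map_sub, map_smul] at h
    have hco : B w (u - B k u • u₀) = B w u := by
      rw [map_sub, map_smul, hwu₀, smul_eq_mul, mul_zero, sub_zero]
    rw [hco] at h
    have hFu₀ : F u₀ = -w := by rw [hw, neg_neg]
    rw [hFu₀, smul_neg, sub_neg_eq_add] at h
    exact eq_sub_of_add_eq h
  have hli : LinearIndependent ℝ ![k, w] := by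
    rw [LinearIndependent.pair_iff]
    intro s t hst
    have hwk : B w k = 0 := by rw [hsym]; exact hkw
    have h1 : B w (s • k + t • w) = 0 := by rw [hst, map_zero]
    rw [map_add, map_smul, map_smul, smul_eq_mul, smul_eq_mul, hwk, hww] at h1
    have ht : t = 0 := by
      have : t * μ = 0 := by linarith
      rcases mul_eq_zero.mp this with h | h
      · exact h
      · exact absurd h hμ
    subst ht
    rw [zero_smul, add_zero] at hst
    rcases smul_eq_zero.mp hst with h | h
    · exact ⟨h, rfl⟩
    · exact absurd h hk0
  constructor
  · exact ⟨w, hli, hkw, hww, hmain⟩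
  · intro k' w' G hk'k' hk'w' _ hG u
    have hw'k' : B w' k' = 0 := by rw [hsym]; exact hk'w'
    rw [hG (G u), hG u, map_sub, map_smul, map_smul, map_sub, map_smul,
      map_smul, smul_eq_mul, smul_eq_mul, smul_eq_mul, smul_eq_mul,
      hk'k', hk'w', hw'k']
    rw [show B w' u * 0 - B k' u * B w' w' = -(B w' w') * B k' u by ring,
      show B w' u * 0 - B k' u * 0 = (0:ℝ) by ring, zero_smul, sub_zero]
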